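/- Not every doubly stochastic matrix is unistochastic: there exists a 3×3 doubly stochastic matrix T such that no 3×3 unitary U satisfies T_{ij} = |U_{ij}|² for all i, j. -/

import Mathlib

open Matrix Finset

/-- Not every doubly stochastic matrix is unistochastic: there exists a 3×3 doubly
stochastic matrix `T` such that no 3×3 unitary `U` satisfies `T i j = |U i j|²`. -/
theorem stmt_2 :
    ∃ T : Matrix (Fin 3) (Fin 3) ℝ,
      ((∀ i j, 0 ≤ T i j) ∧ (∀ i, ∑ j, T i j = 1) ∧ (∀ j, ∑ i, T i j = 1)) ∧
      ¬ ∃ U ∈ Matrix.unitaryGroup (Fin 3) ℂ, ∀ i j, T i j = ‖U i j‖ ^ 2 := by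
  refine ⟨!![0, 1/2, 1/2; 1/2, 0, 1/2; 1/2, 1/2, 0], ⟨?_, ?_, ?_⟩, ?_⟩
  · intro i j; fin_cases i <;> fin_cases j <;> norm_num
  · intro i; fin_cases i <;> simp [Fin.sum_univ_three, Matrix.vecHead, Matrix.vecTail] <;> norm_num
  · intro j; fin_cases j <;> simp [Fin.sum_univ_three, Matrix.vecHead, Matrix.vecTail] <;> norm_num
  · rintro ⟨U, hU, h⟩
    rw [Matrix.mem_unitaryGroup_iff] at hU
    have horth : (U * star U) 0 1 = 0 := by rw [hU]; simp
    rw [Matrix.mul_apply] at horth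
    simp only [Matrix.star_apply] at horth
    have h00 : U 0 0 = 0 := by
      have := h 0 0
      simp at this
      exact norm_eq_zero.mp (by nlinarith [norm_nonneg (U 0 0)])
    have h11 : U 1 1 = 0 := by
      have := h 1 1
      simp at this
      exact norm_eq_zero.mp (by nlinarith [norm_nonneg (U 1 1)])
    have h02 : ‖U 0 2‖ ^ 2 = 1/2 := by have := h 0 2; simp at this; linarith
    have h12 : ‖U 1 2‖ ^ 2 = 1/2 := by have := h 1 2; simp at this; linarith
    rw [Fin.sum_univ_three, h00, h11] at horth
    simp at horth
    rcases horth with h' | h'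
    · rw [h'] at h02; simp at h02
    · rw [h'] at h12; simp at h12
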